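/- For positive reals κ_1 ≥ κ_2 ≥ ... ≥ κ_n and 1 ≤ k ≤ n, there exists a constant η_0 > 0 depending only on n and k such that σ_k^{11}(κ)·κ_1 ≥ η_0·σ_k(κ), where σ_k^{11}(κ) = σ_{k-1}(κ_2,...,κ_n) is the partial derivative of σ_k with respect to κ_1. -/
import Mathlib


/-- The `j`-th elementary symmetric polynomial of `f` over the finite index set `s`. -/
noncomputable def esymm {ι : Type*} [DecidableEq ι] (s : Finset ι) (f : ι → ℝ) (j : ℕ) : ℝ :=
  ∑ t ∈ s.powersetCard j, ∏ i ∈ t, f i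

/-- For positive reals `κ_1 ≥ κ_2 ≥ … ≥ κ_n` and `1 ≤ k ≤ n`, there is a constant `η₀ > 0`
depending only on `n` and `k` such that `σ_k^{11}(κ)·κ_1 ≥ η₀·σ_k(κ)`, where
`σ_k^{11}(κ) = σ_{k-1}(κ_2,…,κ_n)`. -/
theorem stmt3 (n k : ℕ) (hn : 1 ≤ n) (hk1 : 1 ≤ k) (hkn : k ≤ n) :
    ∃ η₀ > (0 : ℝ), ∀ κ : Fin n → ℝ, (∀ i, 0 < κ i) →
      (∀ i j : Fin n, i ≤ j → κ j ≤ κ i) →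
      esymm (Finset.univ.erase (⟨0, hn⟩ : Fin n)) κ (k - 1) * κ ⟨0, hn⟩
        ≥ η₀ * esymm Finset.univ κ k := by
  have hc : 0 < (n.choose k : ℝ) := by exact_mod_cast Nat.choose_pos hkn
  refine ⟨(n.choose k : ℝ)⁻¹, by positivity, ?_⟩
  intro κ hpos hmono
  set z : Fin n := ⟨0, hn⟩ with hz
  set S : Finset (Fin n) := Finset.univ.erase z with hS
  set A : ℝ := esymm S κ (k - 1) with hA
  -- each (k-1)-term product is ≤ A
  have hterm : ∀ T ∈ S.powersetCard (k - 1), (∏ i ∈ T, κ i) ≤ A := by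
    intro T hT
    rw [hA, esymm]
    refine Finset.single_le_sum (f := fun t => ∏ i ∈ t, κ i) (fun t _ => ?_) hT
    exact Finset.prod_nonneg fun i _ => (hpos i).le
  -- each k-subset of univ contributes at most κ z * A
  have hbound : ∀ T ∈ (Finset.univ : Finset (Fin n)).powersetCard k,
      (∏ i ∈ T, κ i) ≤ κ z * A := by
    intro T hT
    rw [Finset.mem_powersetCard] at hT
    have hTne : T.Nonempty := by
      rw [← Finset.card_pos, hT.2]; exact hk1
    by_cases hzT : z ∈ T
    · rw [← Finset.mul_prod_erase T κ hzT]
      refine mul_le_mul_of_nonneg_left (hterm _ ?_) (hpos z).le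
      rw [Finset.mem_powersetCard]
      constructor
      · intro x hx
        rw [Finset.mem_erase] at hx ⊢
        exact ⟨hx.1, Finset.mem_univ x⟩
      · rw [Finset.card_erase_of_mem hzT, hT.2]
    · obtain ⟨t, htT⟩ := hTne
      rw [← Finset.mul_prod_erase T κ htT]
      have h1 : κ t ≤ κ z := hmono z t (Fin.mk_le_mk.mpr (Nat.zero_le _))
      have h2 : (∏ i ∈ T.erase t, κ i) ≤ A := by
        refine hterm _ ?_
        rw [Finset.mem_powersetCard]
        constructor
        · intro x hx
          rw [Finset.mem_erase] at hx
          rw [Finset.mem_erase]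
          refine ⟨fun h => hzT (h ▸ hx.2), Finset.mem_univ x⟩
        · rw [Finset.card_erase_of_mem htT, hT.2]
      exact mul_le_mul h1 h2 (Finset.prod_nonneg fun i _ => (hpos i).le) (hpos z).le
  have hsum : esymm Finset.univ κ k ≤ (n.choose k : ℝ) * (κ z * A) := by
    have := Finset.sum_le_card_nsmul _ _ _ hbound
    rwa [Finset.card_powersetCard, Finset.card_univ, Fintype.card_fin,
      nsmul_eq_mul] at this
    
  have : (n.choose k : ℝ)⁻¹ * esymm Finset.univ κ k ≤ κ z * A := by
    calc (n.choose k : ℝ)⁻¹ * esymm Finset.univ κ k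
        ≤ (n.choose k : ℝ)⁻¹ * ((n.choose k : ℝ) * (κ z * A)) := by
          exact mul_le_mul_of_nonneg_left hsum (by positivity)
      _ = κ z * A := by field_simp
  rw [ge_iff_le, mul_comm A (κ z)] at *
  exact this
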